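/- Each local block operator T_j f = ∫_{F_j} ∫_{G_j} ⟨f, f_x⟩ ⟨T f̃_x, f_y⟩ f̃_y dλ(x) dλ(y) is a compact operator on H. -/

import Mathlib

set_option maxHeartbeats 1000000


open MeasureTheory Filter Metric
open scoped ComplexInnerProductSpace Topology

/-- A pair of families `(F, G)` in a Hilbert space, indexed by a metric measure
space, is `p`-weakly localized: the `p`-weighted Schur-type integral bounds hold,
and the tail integrals over complements of balls tend to `0` uniformly. -/
def WeaklyLocalized {H X : Type*} [NormedAddCommGroup H] [InnerProductSpace ℂ H]
    [MetricSpace X] [MeasurableSpace X] (μ : Measure X) (p : X → ℝ)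
    (F G : X → H) : Prop :=
  (∃ C : ℝ, ∀ x, ∫ y, ‖(⟪F x, G y⟫ : ℂ)‖ * p y ∂μ ≤ C * p x) ∧
  (∃ C : ℝ, ∀ y, ∫ x, ‖(⟪F x, G y⟫ : ℂ)‖ * p x ∂μ ≤ C * p y) ∧
  Tendsto (fun R : ℝ => ⨆ x : X, (p x)⁻¹ * ∫ y in (closedBall x R)ᶜ,
      ‖(⟪F x, G y⟫ : ℂ)‖ * p y ∂μ) atTop (𝓝 0) ∧
  Tendsto (fun R : ℝ => ⨆ y : X, (p y)⁻¹ * ∫ x in (closedBall y R)ᶜ,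
      ‖(⟪F x, G y⟫ : ℂ)‖ * p x ∂μ) atTop (𝓝 0)

/-- Each local block operator
`T_j f = ∫_{F_j} ∫_{G_j} ⟨f, f_x⟩ ⟨T f̃_x, f_y⟩ f̃_y dλ(x) dλ(y)` associated with a
bounded Borel set `Fj` and its `r`-enlargement `Gj` is a compact operator. -/
theorem block_operator_compact
    {H X : Type*} [NormedAddCommGroup H] [InnerProductSpace ℂ H] [CompleteSpace H]
    [MetricSpace X] [ProperSpace X] [MeasurableSpace X] [OpensMeasurableSpace X]
    (μ : Measure X) (p : X → ℝ) (hp : ∀ x, 0 < p x)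
    (F Ft : X → H) (hFcont : Continuous F) (hFtcont : Continuous Ft)
    (hbdd : ∃ M : ℝ, ∀ x, ‖F x‖ ≤ M ∧ ‖Ft x‖ ≤ M)
    (hμbdd : ∀ s : Set X, Bornology.IsBounded s → μ s < ⊤)
    (hframe : ∃ c C : ℝ, 0 < c ∧ ∀ v : H,
      c * ‖v‖ ^ 2 ≤ (∫ x, ‖(⟪F x, v⟫ : ℂ)‖ ^ 2 ∂μ) ∧
      (∫ x, ‖(⟪F x, v⟫ : ℂ)‖ ^ 2 ∂μ) ≤ C * ‖v‖ ^ 2)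
    (T : H →L[ℂ] H)
    (hloc : WeaklyLocalized μ p (fun x => T (Ft x)) F)
    (Fj : Set X) (hFjmeas : MeasurableSet Fj) (hFjbdd : Bornology.IsBounded Fj)
    (r : ℝ) (hr : 0 < r)
    (Tj : H →L[ℂ] H)
    (hTj : ∀ v g : H, (⟪g, Tj v⟫ : ℂ) =
      ∫ y in Fj, (∫ x in {x : X | infDist x Fj ≤ r},
        (⟪F x, v⟫ : ℂ) * (⟪F y, T (Ft x)⟫ : ℂ) ∂μ) * (⟪g, Ft y⟫ : ℂ) ∂μ) :
    IsCompactOperator Tj := by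
  classical
  obtain ⟨M, hM⟩ := hbdd
  set Gj : Set X := {x : X | infDist x Fj ≤ r} with hGj_def
  -- trivial case : `Fj = ∅`
  rcases Fj.eq_empty_or_nonempty with hFjemp | hFjne
  · have hTj0 : ⇑Tj = fun _ : H => (0 : H) := by
      funext v
      refine ext_inner_left ℂ fun g => ?_
      rw [hTj v g, hFjemp]
      simp
    rw [hTj0]
    exact isCompactOperator_zero
  obtain ⟨x0, hx0⟩ := hFjne
  have hM0 : 0 ≤ M := le_trans (norm_nonneg _) (hM x0).1
  -- `Gj` is a closed bounded (hence compact) set of finite measure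
  obtain ⟨R, hR⟩ := (isBounded_iff_subset_closedBall x0).1 hFjbdd
  have hR0 : 0 ≤ R := le_trans dist_nonneg (hR hx0)
  have hGj_sub : Gj ⊆ closedBall x0 (r + 1 + R) := by
    intro x hx
    have h1 : infDist x Fj < r + 1 := lt_of_le_of_lt hx (by linarith)
    obtain ⟨y, hyF, hy⟩ := (infDist_lt_iff ⟨x0, hx0⟩).1 h1
    have h2 : dist y x0 ≤ R := hR hyF
    have := dist_triangle x y x0
    simp only [mem_closedBall] at *
    linarith
  have hGjbdd : Bornology.IsBounded Gj := isBounded_closedBall.subset hGj_sub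
  have hGjclosed : IsClosed Gj := isClosed_le (continuous_infDist_pt Fj) continuous_const
  have hGjmeas : MeasurableSet Gj := hGjclosed.measurableSet
  have hK : IsCompact Gj := by
    have := hGjbdd.isCompact_closure
    rwa [hGjclosed.closure_eq] at this
  have hμFj : μ Fj < ⊤ := hμbdd Fj hFjbdd
  have hμGj : μ Gj < ⊤ := hμbdd Gj hGjbdd
  haveI hfinFj : IsFiniteMeasure (μ.restrict Fj) :=
    ⟨by rwa [Measure.restrict_apply_univ]⟩
  haveI hfinGj : IsFiniteMeasure (μ.restrict Gj) :=
    ⟨by rwa [Measure.restrict_apply_univ]⟩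
  -- basic bounds
  have hTF : ∀ x, ‖T (Ft x)‖ ≤ ‖T‖ * M := fun x =>
    le_trans (T.le_opNorm _) (by
      have := (hM x).2
      have h0 : (0:ℝ) ≤ ‖T‖ := norm_nonneg _
      nlinarith)
  have hinner : ∀ x (u : H), ‖(⟪F x, u⟫ : ℂ)‖ ≤ M * ‖u‖ := fun x u =>
    le_trans (norm_inner_le_norm _ _) (by
      have := (hM x).1
      have h0 : (0:ℝ) ≤ ‖u‖ := norm_nonneg _
      nlinarith)
  have hinnerFt : ∀ x (u : H), ‖(⟪u, Ft x⟫ : ℂ)‖ ≤ ‖u‖ * M := fun x u =>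
    le_trans (norm_inner_le_norm _ _) (by
      have := (hM x).2
      have h0 : (0:ℝ) ≤ ‖u‖ := norm_nonneg _
      nlinarith)
  -- the vector kernel `w`
  set B : ℝ := M * (‖T‖ * M) * M with hB_def
  have hB0 : 0 ≤ B := by positivity
  have hker_bound : ∀ x y : X, ‖(⟪F y, T (Ft x)⟫ : ℂ) • Ft y‖ ≤ B := by
    intro x y
    rw [norm_smul]
    have h1 : ‖(⟪F y, T (Ft x)⟫ : ℂ)‖ ≤ M * (‖T‖ * M) :=
      le_trans (hinner y _) (by
        have := hTF x
        nlinarith)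
    have h2 := (hM y).2
    have h3 : (0:ℝ) ≤ ‖(⟪F y, T (Ft x)⟫ : ℂ)‖ := norm_nonneg _
    have h4 : (0:ℝ) ≤ ‖Ft y‖ := norm_nonneg _
    nlinarith
  set w : X → H := fun x => ∫ y in Fj, (⟪F y, T (Ft x)⟫ : ℂ) • Ft y ∂μ with hw_def
  have hw_int : ∀ x : X, Integrable (fun y => (⟪F y, T (Ft x)⟫ : ℂ) • Ft y)
      (μ.restrict Fj) := by
    intro x
    refine ⟨Continuous.aestronglyMeasurable ?_, HasFiniteIntegral.of_bounded
      (C := B) (ae_of_all _ fun y => hker_bound x y)⟩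
    exact ((hFcont.inner (continuous_const : Continuous fun _ : X => T (Ft x)))).smul hFtcont
  have hw_cont : Continuous w := by
    refine continuous_of_dominated (bound := fun _ => B) ?_ ?_ (integrable_const B) ?_
    · exact fun x => (hw_int x).1
    · exact fun x => ae_of_all _ fun y => hker_bound x y
    · exact ae_of_all _ fun y =>
        (continuous_const.inner ((T.continuous.comp hFtcont))).smul continuous_const
  have hw_bound : ∀ x, ‖w x‖ ≤ B * (μ Fj).toReal := by
    intro x
    have h := norm_integral_le_of_norm_le_const (μ := μ.restrict Fj)
      (f := fun y => (⟪F y, T (Ft x)⟫ : ℂ) • Ft y) (C := B)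
      (ae_of_all _ fun y => hker_bound x y)
    rwa [measureReal_def, Measure.restrict_apply_univ] at h
  -- inner products with `w`
  have hw_inner : ∀ (g : H) (x : X), (⟪g, w x⟫ : ℂ) =
      ∫ y in Fj, (⟪F y, T (Ft x)⟫ : ℂ) * (⟪g, Ft y⟫ : ℂ) ∂μ := by
    intro g x
    rw [hw_def]
    rw [← integral_inner (hw_int x) g]
    congr 1
    funext y
    rw [inner_smul_right]
  -- representation `Tj v = ∫_{Gj} ⟪F x, v⟫ • w x`
  have hGj_int : ∀ v : H, Integrable (fun x => (⟪F x, v⟫ : ℂ) • w x)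
      (μ.restrict Gj) := by
    intro v
    refine ⟨Continuous.aestronglyMeasurable ((hFcont.inner continuous_const).smul hw_cont),
      HasFiniteIntegral.of_bounded (C := (M * ‖v‖) * (B * (μ Fj).toReal))
        (ae_of_all _ fun x => ?_)⟩
    rw [norm_smul]
    have h1 := hinner x v
    have h2 := hw_bound x
    have h3 : (0:ℝ) ≤ ‖(⟪F x, v⟫ : ℂ)‖ := norm_nonneg _
    have h4 : (0:ℝ) ≤ ‖w x‖ := norm_nonneg _
    nlinarith
  have hrep : ∀ v : H, Tj v = ∫ x in Gj, (⟪F x, v⟫ : ℂ) • w x ∂μ := by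
    intro v
    refine ext_inner_left ℂ fun g => ?_
    rw [← integral_inner (hGj_int v) g]
    have hRHS : ∀ x, (⟪g, (⟪F x, v⟫ : ℂ) • w x⟫ : ℂ)
        = (⟪F x, v⟫ : ℂ) * (⟪g, w x⟫ : ℂ) := fun x => inner_smul_right _ _ _
    rw [hTj v g]
    -- push the constant into the inner integral
    have step1 : (∫ y in Fj, (∫ x in Gj,
          (⟪F x, v⟫ : ℂ) * (⟪F y, T (Ft x)⟫ : ℂ) ∂μ) * (⟪g, Ft y⟫ : ℂ) ∂μ)
        = ∫ y in Fj, ∫ x in Gj,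
          (⟪F x, v⟫ : ℂ) * (⟪F y, T (Ft x)⟫ : ℂ) * (⟪g, Ft y⟫ : ℂ) ∂μ ∂μ := by
      congr 1
      funext y
      rw [← integral_mul_const]
    -- Fubini
    have hprod : Integrable (Function.uncurry fun y x =>
        (⟪F x, v⟫ : ℂ) * (⟪F y, T (Ft x)⟫ : ℂ) * (⟪g, Ft y⟫ : ℂ))
        ((μ.restrict Fj).prod (μ.restrict Gj)) := by
      have hcont : Continuous (fun q : X × X =>
          (⟪F q.2, v⟫ : ℂ) * (⟪F q.1, T (Ft q.2)⟫ : ℂ) * (⟪g, Ft q.1⟫ : ℂ)) := by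
        exact (((hFcont.comp continuous_snd).inner continuous_const).mul
          ((hFcont.comp continuous_fst).inner
            (T.continuous.comp (hFtcont.comp continuous_snd)))).mul
          (continuous_const.inner (hFtcont.comp continuous_fst))
      refine ⟨hcont.aestronglyMeasurable,
        HasFiniteIntegral.of_bounded (C := (M * ‖v‖) * (M * (‖T‖ * M)) * (‖g‖ * M))
          (ae_of_all _ fun q => ?_)⟩
      have h1 := hinner q.2 v
      have h2 : ‖(⟪F q.1, T (Ft q.2)⟫ : ℂ)‖ ≤ M * (‖T‖ * M) :=
        le_trans (hinner q.1 _) (by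
          have := hTF q.2
          nlinarith)
      have h3 := hinnerFt q.1 g
      have n1 : (0:ℝ) ≤ ‖(⟪F q.2, v⟫ : ℂ)‖ := norm_nonneg _
      have n2 : (0:ℝ) ≤ ‖(⟪F q.1, T (Ft q.2)⟫ : ℂ)‖ := norm_nonneg _
      have n3 : (0:ℝ) ≤ ‖(⟪g, Ft q.1⟫ : ℂ)‖ := norm_nonneg _
      have n4 : (0:ℝ) ≤ M * ‖v‖ := by positivity
      have n5 : (0:ℝ) ≤ M * (‖T‖ * M) := by positivity
      have n6 : (0:ℝ) ≤ ‖g‖ * M := by positivity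
      calc ‖(⟪F q.2, v⟫ : ℂ) * (⟪F q.1, T (Ft q.2)⟫ : ℂ) * (⟪g, Ft q.1⟫ : ℂ)‖
          = ‖(⟪F q.2, v⟫ : ℂ)‖ * ‖(⟪F q.1, T (Ft q.2)⟫ : ℂ)‖ * ‖(⟪g, Ft q.1⟫ : ℂ)‖ := by
            rw [norm_mul, norm_mul]
        _ ≤ (M * ‖v‖) * (M * (‖T‖ * M)) * (‖g‖ * M) := by
            apply mul_le_mul (mul_le_mul h1 h2 n2 n4) h3 n3 (by positivity)
    have step2 := integral_integral_swap
      (f := fun y x => (⟪F x, v⟫ : ℂ) * (⟪F y, T (Ft x)⟫ : ℂ) * (⟪g, Ft y⟫ : ℂ))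
      (μ := μ.restrict Fj) (ν := μ.restrict Gj) hprod
    rw [step1, step2]
    congr 1
    funext x
    rw [hRHS x, hw_inner g x, ← integral_const_mul]
    congr 1
    funext y
    ring
  -- compactness via total boundedness
  have hiff := isCompactOperator_iff_isCompact_closure_image_closedBall
    (Tj : H →ₗ[ℂ] H) (zero_lt_one (α := ℝ))
  rw [ContinuousLinearMap.coe_coe] at hiff
  rw [hiff]
  refine TotallyBounded.isCompact_of_isClosed (TotallyBounded.closure ?_) isClosed_closure
  rw [Metric.totallyBounded_iff]
  intro ε hε
  -- uniform continuity of `w` on the compact set `Gj`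
  set ε' : ℝ := ε / (4 * (M + 1) * ((μ Gj).toReal + 1)) with hε'_def
  have hε'0 : 0 < ε' := by
    apply div_pos hε
    have : (0:ℝ) ≤ (μ Gj).toReal := ENNReal.toReal_nonneg
    nlinarith
  obtain ⟨δ, hδ0, hδ⟩ := Metric.uniformContinuousOn_iff.1
    (hK.uniformContinuousOn_of_continuous hw_cont.continuousOn) ε' hε'0
  -- finite cover of `Gj` by `δ`-balls centered in `Gj`
  obtain ⟨t, ht⟩ := hK.elim_finite_subcover (fun c : Gj => ball (c : X) δ)
    (fun c => isOpen_ball) (fun x hx => Set.mem_iUnion.2 ⟨⟨x, hx⟩, mem_ball_self hδ0⟩)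
  -- disjointify the cover
  set L : List Gj := t.toList with hL_def
  set n : ℕ := L.length with hn_def
  set c : Fin n → X := fun i => (L.get i : X) with hc_def
  have hcGj : ∀ i, c i ∈ Gj := fun i => (L.get i).2
  have hcover' : ∀ x ∈ Gj, ∃ i : Fin n, x ∈ ball (c i) δ := by
    intro x hx
    obtain ⟨u, hu⟩ := Set.mem_iUnion.1 (ht hx)
    obtain ⟨hu_mem, hxu⟩ := Set.mem_iUnion.1 hu
    obtain ⟨i, hi⟩ := List.mem_iff_get.1 ((Finset.mem_toList.2 hu_mem))
    exact ⟨i, by rw [hc_def]; simp only; rw [hi]; exact hxu⟩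
  set s : Fin n → Set X := fun i =>
    (Gj ∩ ball (c i) δ) \ ⋃ (j : Fin n) (_ : j < i), ball (c j) δ with hs_def
  have hs_meas : ∀ i, MeasurableSet (s i) := fun i =>
    ((hGjmeas.inter measurableSet_ball).diff
      (MeasurableSet.iUnion fun j => MeasurableSet.iUnion fun _ => measurableSet_ball))
  have hs_subGj : ∀ i, s i ⊆ Gj := fun i x hx => hx.1.1
  have hs_ball : ∀ i, s i ⊆ ball (c i) δ := fun i x hx => hx.1.2
  have hdisj : Pairwise (Function.onFun Disjoint s) := by
    intro i j hij
    rcases lt_or_gt_of_ne hij with hlt | hgt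
    · refine Set.disjoint_left.2 fun x hxi hxj => ?_
      exact hxj.2 (Set.mem_iUnion.2 ⟨i, Set.mem_iUnion.2 ⟨hlt, hs_ball i hxi⟩⟩)
    · refine Set.disjoint_left.2 fun x hxi hxj => ?_
      exact hxi.2 (Set.mem_iUnion.2 ⟨j, Set.mem_iUnion.2 ⟨hgt, hs_ball j hxj⟩⟩)
  have hcover : (⋃ i, s i) = Gj := by
    apply Set.Subset.antisymm
    · exact Set.iUnion_subset hs_subGj
    · intro x hx
      have hne : (Finset.univ.filter fun i : Fin n => x ∈ ball (c i) δ).Nonempty := by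
        obtain ⟨i, hi⟩ := hcover' x hx
        exact ⟨i, Finset.mem_filter.2 ⟨Finset.mem_univ _, hi⟩⟩
      obtain ⟨i0, hi0mem', hi0min⟩ := Finset.exists_min_image
        (Finset.univ.filter fun i : Fin n => x ∈ ball (c i) δ) id hne
      have hi0mem : x ∈ ball (c i0) δ := (Finset.mem_filter.1 hi0mem').2
      refine Set.mem_iUnion.2 ⟨i0, ⟨⟨hx, hi0mem⟩, ?_⟩⟩
      intro hmem
      obtain ⟨j, hj⟩ := Set.mem_iUnion.1 hmem
      obtain ⟨hjlt, hjball⟩ := Set.mem_iUnion.1 hj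
      have : i0 ≤ j := hi0min j (Finset.mem_filter.2 ⟨Finset.mem_univ _, hjball⟩)
      exact absurd hjlt (not_lt.2 this)
  -- finite measures on pieces
  have hμsi_ne : ∀ i, μ (s i) ≠ ⊤ := fun i =>
    ne_top_of_le_ne_top hμGj.ne (measure_mono (hs_subGj i))
  haveI hfinsi : ∀ i, IsFiniteMeasure (μ.restrict (s i)) := fun i =>
    ⟨by rw [Measure.restrict_apply_univ]; exact lt_top_iff_ne_top.2 (hμsi_ne i)⟩
  -- the compact approximating set
  set S : Set H := (fun a : Fin n → ℂ => ∑ i, a i • w (c i)) ''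
    (Set.univ.pi fun _ : Fin n => closedBall (0 : ℂ) (M * (μ Gj).toReal)) with hS_def
  have hScompact : IsCompact S := by
    apply IsCompact.image
    · exact isCompact_univ_pi fun i => isCompact_closedBall _ _
    · exact continuous_finset_sum _ fun i _ => (continuous_apply i).smul continuous_const
  -- every `Tj v`, for `v` in the unit closed ball, is close to `S`
  have happrox : ∀ v ∈ closedBall (0 : H) 1, ∃ z ∈ S, ‖Tj v - z‖ ≤ ε / 2 := by
    intro v hv
    have hv1 : ‖v‖ ≤ 1 := by rwa [mem_closedBall, dist_zero_right] at hv
    set a : Fin n → ℂ := fun i => ∫ x in s i, (⟪F x, v⟫ : ℂ) ∂μ with ha_def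
    have hinnerv : ∀ x : X, ‖(⟪F x, v⟫ : ℂ)‖ ≤ M := fun x =>
      le_trans (hinner x v) (by nlinarith)
    have hFv_int : ∀ i, Integrable (fun x => (⟪F x, v⟫ : ℂ)) (μ.restrict (s i)) := by
      intro i
      exact ⟨(hFcont.inner continuous_const).aestronglyMeasurable,
        HasFiniteIntegral.of_bounded (C := M) (ae_of_all _ hinnerv)⟩
    have ha_mem : ∀ i, a i ∈ closedBall (0 : ℂ) (M * (μ Gj).toReal) := by
      intro i
      rw [mem_closedBall, dist_zero_right]
      have h := norm_integral_le_of_norm_le_const (μ := μ.restrict (s i))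
        (f := fun x => (⟪F x, v⟫ : ℂ)) (C := M) (ae_of_all _ hinnerv)
      rw [measureReal_def, Measure.restrict_apply_univ] at h
      refine le_trans h ?_
      have : (μ (s i)).toReal ≤ (μ Gj).toReal :=
        ENNReal.toReal_mono hμGj.ne (measure_mono (hs_subGj i))
      nlinarith
    refine ⟨∑ i, a i • w (c i), ⟨a, fun i _ => ha_mem i, rfl⟩, ?_⟩
    -- split the integral over the pieces
    have hsplit : Tj v = ∑ i, ∫ x in s i, (⟪F x, v⟫ : ℂ) • w x ∂μ := by
      rw [hrep v, ← hcover]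
      exact integral_iUnion_fintype hs_meas hdisj fun i =>
        (hGj_int v).mono_measure (Measure.restrict_mono (hs_subGj i) le_rfl)
    have hterm : ∀ i : Fin n, a i • w (c i) = ∫ x in s i, (⟪F x, v⟫ : ℂ) • w (c i) ∂μ := by
      intro i
      rw [ha_def]
      exact (integral_smul_const _ _).symm
    have hdiff : Tj v - ∑ i, a i • w (c i)
        = ∑ i, ∫ x in s i, ((⟪F x, v⟫ : ℂ) • w x - (⟪F x, v⟫ : ℂ) • w (c i)) ∂μ := by
      rw [hsplit]
      rw [← Finset.sum_sub_distrib]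
      congr 1
      funext i
      rw [hterm i, ← integral_sub]
      · exact (hGj_int v).mono_measure (Measure.restrict_mono (hs_subGj i) le_rfl)
      · exact ⟨((hFcont.inner continuous_const).smul continuous_const).aestronglyMeasurable,
          HasFiniteIntegral.of_bounded (C := M * ‖w (c i)‖) (ae_of_all _ fun x => by
            rw [norm_smul]
            have := hinnerv x
            have h4 : (0:ℝ) ≤ ‖w (c i)‖ := norm_nonneg _
            nlinarith)⟩
    rw [hdiff]
    have hterm_bound : ∀ i : Fin n,
        ‖∫ x in s i, ((⟪F x, v⟫ : ℂ) • w x - (⟪F x, v⟫ : ℂ) • w (c i)) ∂μ‖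
          ≤ (M * ε') * (μ (s i)).toReal := by
      intro i
      have hae : ∀ᵐ x ∂μ.restrict (s i),
          ‖(⟪F x, v⟫ : ℂ) • w x - (⟪F x, v⟫ : ℂ) • w (c i)‖ ≤ M * ε' := by
        filter_upwards [ae_restrict_mem (hs_meas i)] with x hx
        rw [← smul_sub, norm_smul]
        have h1 := hinnerv x
        have h2 : dist (w x) (w (c i)) < ε' :=
          hδ x (hs_subGj i hx) (c i) (hcGj i) (mem_ball.1 (hs_ball i hx))
        rw [dist_eq_norm] at h2
        have h3 : (0:ℝ) ≤ ‖(⟪F x, v⟫ : ℂ)‖ := norm_nonneg _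
        have h4 : (0:ℝ) ≤ ‖w x - w (c i)‖ := norm_nonneg _
        nlinarith
      have h := norm_integral_le_of_norm_le_const (μ := μ.restrict (s i))
        (f := fun x => (⟪F x, v⟫ : ℂ) • w x - (⟪F x, v⟫ : ℂ) • w (c i))
        (C := M * ε') hae
      rwa [measureReal_def, Measure.restrict_apply_univ] at h
    have hsum_meas : ∑ i, (μ (s i)).toReal ≤ (μ Gj).toReal := by
      have h1 : μ (⋃ i, s i) = ∑' i, μ (s i) :=
        measure_iUnion hdisj hs_meas
      rw [hcover] at h1
      rw [tsum_fintype] at h1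
      rw [← ENNReal.toReal_sum (fun i _ => hμsi_ne i), ← h1]
    calc ‖∑ i, ∫ x in s i, ((⟪F x, v⟫ : ℂ) • w x - (⟪F x, v⟫ : ℂ) • w (c i)) ∂μ‖
        ≤ ∑ i, ‖∫ x in s i, ((⟪F x, v⟫ : ℂ) • w x - (⟪F x, v⟫ : ℂ) • w (c i)) ∂μ‖ :=
          norm_sum_le _ _
      _ ≤ ∑ i, (M * ε') * (μ (s i)).toReal := Finset.sum_le_sum fun i _ => hterm_bound i
      _ = (M * ε') * ∑ i, (μ (s i)).toReal := by rw [Finset.mul_sum]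
      _ ≤ (M * ε') * (μ Gj).toReal := by
          apply mul_le_mul_of_nonneg_left hsum_meas (by positivity)
      _ ≤ ε / 2 := by
          have hG0 : (0:ℝ) ≤ (μ Gj).toReal := ENNReal.toReal_nonneg
          have hD : (0:ℝ) < 4 * (M + 1) * ((μ Gj).toReal + 1) := by nlinarith
          have key : M * (μ Gj).toReal / (4 * (M + 1) * ((μ Gj).toReal + 1)) ≤ 1 / 2 := by
            rw [div_le_iff₀ hD]
            nlinarith
          calc M * ε' * (μ Gj).toReal
              = (M * (μ Gj).toReal / (4 * (M + 1) * ((μ Gj).toReal + 1))) * ε := by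
                rw [hε'_def]; ring
            _ ≤ (1 / 2) * ε := mul_le_mul_of_nonneg_right key hε.le
            _ = ε / 2 := by ring
  -- conclude total boundedness
  obtain ⟨t2, ht2fin, ht2⟩ := Metric.totallyBounded_iff.1 hScompact.totallyBounded
    (ε / 4) (by linarith)
  refine ⟨t2, ht2fin, ?_⟩
  intro u hu
  obtain ⟨v, hv, rfl⟩ := hu
  obtain ⟨z, hzS, hz⟩ := happrox v hv
  obtain ⟨y, hy⟩ := Set.mem_iUnion.1 (ht2 hzS)
  obtain ⟨hyt, hzy⟩ := Set.mem_iUnion.1 hy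
  refine Set.mem_iUnion.2 ⟨y, Set.mem_iUnion.2 ⟨hyt, ?_⟩⟩
  rw [mem_ball]
  calc dist (Tj v) y ≤ dist (Tj v) z + dist z y := dist_triangle _ _ _
    _ < ε / 2 + ε / 4 + ε / 4 := by
        rw [dist_eq_norm]
        have := mem_ball.1 hzy
        linarith
    _ ≤ ε := by linarith
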